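/- Let M and N be matroids on the same ground set E with M a quotient of N, and fix any total order on E. Then the unique Gale-minimal basis of M is a subset of the unique Gale-minimal basis of N. -/

import Mathlib

open Finset

attribute [local instance] Classical.propDecidable

noncomputable section

/-- A matroid on `Fin n`, presented by its collection of bases (basis exchange axiom). -/
structure FinMatroid (n : ℕ) where
  bases : Finset (Finset (Fin n))
  bases_nonempty : bases.Nonempty
  exchange : ∀ B₁ ∈ bases, ∀ B₂ ∈ bases, ∀ x ∈ B₁ \ B₂,
      ∃ y ∈ B₂ \ B₁, insert y (B₁.erase x) ∈ bases

/-- Rank function associated to a collection of bases: `rk S = max |S ∩ B|`. -/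
def rkOf {n : ℕ} (Bs : Finset (Finset (Fin n))) (S : Finset (Fin n)) : ℕ :=
  Bs.sup fun B => (S ∩ B).card

/-- Rank function of a matroid. -/
def rk {n : ℕ} (M : FinMatroid n) (S : Finset (Fin n)) : ℕ := rkOf M.bases S

/-- Independence w.r.t. a collection of bases. -/
def Indep {n : ℕ} (Bs : Finset (Finset (Fin n))) (S : Finset (Fin n)) : Prop :=
  ∃ B ∈ Bs, S ⊆ B

/-- A circuit: a dependent set all of whose proper subsets are independent. -/
def IsCircuit {n : ℕ} (Bs : Finset (Finset (Fin n))) (C : Finset (Fin n)) : Prop :=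
  ¬ Indep Bs C ∧ ∀ D ⊆ C, D ≠ C → Indep Bs D

/-- `M` is a quotient of `N`: every circuit of `N` is a union of circuits of `M`. -/
def IsQuotient {n : ℕ} (BsM BsN : Finset (Finset (Fin n))) : Prop :=
  ∀ C, IsCircuit BsN C → ∃ 𝒟 : Finset (Finset (Fin n)),
    (∀ D ∈ 𝒟, IsCircuit BsM D) ∧ C = 𝒟.sup id

/-- The values of a finset under the key `f`, sorted increasingly. -/
def sortedVals {n : ℕ} (f : Fin n → ℕ) (A : Finset (Fin n)) : List ℕ :=
  (A.image f).sort (· ≤ ·)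

/-- Gale order (w.r.t. the total order on `Fin n` given by an injective key `f`):
`A ≤ B` iff the `i`-th smallest element of `A` is `≤` the `i`-th smallest element of `B`. -/
def galeLE {n : ℕ} (f : Fin n → ℕ) (A B : Finset (Fin n)) : Prop :=
  List.Forall₂ (· ≤ ·) (sortedVals f A) (sortedVals f B)

/-- Position of `a` in the cyclic order starting at `i` (so `cpos i i = 0`). -/
def cpos {n : ℕ} (i a : Fin n) : ℕ := ((a - i : Fin n) : ℕ)

/-- Cyclic half-open interval `(a, b]`; in particular `(a, a] = ∅`. -/
def cycIoc {n : ℕ} (a b : Fin n) : Finset (Fin n) :=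
  Finset.univ.filter fun x => cpos a x ≠ 0 ∧ cpos a x ≤ cpos a b

/-- Cyclic closed interval `[a, b]`. -/
def cycIcc {n : ℕ} (a b : Fin n) : Finset (Fin n) :=
  Finset.univ.filter fun x => cpos a x ≤ cpos a b

/-- A decorated permutation: a permutation together with a coloring in `{0, ±1}`
whose zero set is exactly the set of non-fixed points. -/
structure DecoratedPerm (n : ℕ) where
  perm : Equiv.Perm (Fin n)
  col : Fin n → ℤ
  col_range : ∀ i, col i = 0 ∨ col i = 1 ∨ col i = -1
  col_zero_iff : ∀ i, col i = 0 ↔ perm i ≠ i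

/-- Grassmann necklace term `I_i = {a : a <_i π⁻¹(a) or col a = -1}`. -/
def neck {n : ℕ} (π : DecoratedPerm n) (i : Fin n) : Finset (Fin n) :=
  Finset.univ.filter fun a => cpos i a < cpos i (π.perm.symm a) ∨ π.col a = -1

/-- Grassmann conecklace term `J_i = π⁻¹(I_i)`. -/
def coneck {n : ℕ} (π : DecoratedPerm n) (i : Fin n) : Finset (Fin n) :=
  (neck π i).image π.perm.symm

/-- Rank of a decorated permutation: the common size of its necklace terms. -/
def drank {n : ℕ} (π : DecoratedPerm n) : ℕ :=
  if h : 0 < n then (neck π ⟨0, h⟩).card else 0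

/-- Grassmann interval `S^π_i = (π⁻¹(i), i]`, with the coloop convention `[n]`
(the loop convention `∅` is automatic since `(i, i] = ∅`). -/
def SInt {n : ℕ} (π : DecoratedPerm n) (i : Fin n) : Finset (Fin n) :=
  if π.col i = -1 then Finset.univ else cycIoc (π.perm.symm i) i

/-- Shift interval `S^{π,σ}_i = (π⁻¹(i), σ⁻¹(i)]`, with the convention `[n]` when
`i` is a loop of `π` and a coloop of `σ`. -/
def shiftInt {n : ℕ} (π σ : DecoratedPerm n) (i : Fin n) : Finset (Fin n) :=
  if π.col i = 1 ∧ σ.col i = -1 then Finset.univ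
  else cycIoc (π.perm.symm i) (σ.perm.symm i)

/-- CW-arrow starting at `i`: the cyclic interval from `i` to `π(i)` (all of `[n]` for coloops). -/
def cwArrow {n : ℕ} (π : DecoratedPerm n) (i : Fin n) : Finset (Fin n) :=
  if π.col i = -1 then Finset.univ
  else Finset.univ.filter fun j => cpos i j ≤ cpos i (π.perm i)

/-- The CW-function: the number of CW-arrows contained in `A` (for `A ≠ [n]`),
and `n - rk(M)` for `A = [n]`. -/
def cw {n : ℕ} (π : DecoratedPerm n) (A : Finset (Fin n)) : ℕ :=
  if A = Finset.univ then n - drank π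
  else (Finset.univ.filter fun i => cwArrow π i ⊆ A).card

/-- Bases of the positroid associated with a decorated permutation: sets that are
above every necklace term in the corresponding cyclic Gale order. -/
def positroidBases {n : ℕ} (π : DecoratedPerm n) : Finset (Finset (Fin n)) :=
  Finset.univ.filter fun B => ∀ i, galeLE (cpos i) (neck π i) B

/-- `σ` is the cyclic shift `ρ_A(π)`: positions in `A` are frozen; at a position
`i ∉ A` the new value is `π(j)` where `j` is the maximum of `Aᶜ` in the cyclic order
starting at `i`; new fixed points are decorated as loops. -/
def IsCyclicShift {n : ℕ} (π σ : DecoratedPerm n) (A : Finset (Fin n)) : Prop :=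
  (∀ i ∈ A, σ.perm i = π.perm i ∧ σ.col i = π.col i) ∧
  (∀ i ∉ A, ∃ j, j ∉ A ∧ (∀ j', j' ∉ A → cpos i j' ≤ cpos i j) ∧ σ.perm i = π.perm j) ∧
  (∀ i ∉ A, σ.col i = if σ.perm i = i then 1 else 0)

/-- The shift intervals `S^{π,σ}_i` partition `[n]`. -/
def ShiftPartition {n : ℕ} (π σ : DecoratedPerm n) : Prop :=
  (∀ i j : Fin n, i ≠ j → Disjoint (shiftInt π σ i) (shiftInt π σ j)) ∧
  Finset.univ.biUnion (shiftInt π σ) = Finset.univ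

/-- `C` is a cyclic component of `A`: a maximal cyclic interval contained in `A`. -/
def IsCycComponent {n : ℕ} [NeZero n] (A C : Finset (Fin n)) : Prop :=
  ∃ a b : Fin n, C = cycIcc a b ∧ C ⊆ A ∧ (a - 1) ∉ A ∧ (b + 1) ∉ A

/-- Bases of the lattice path matroid `M[U, L]`. -/
def lpmBases {n : ℕ} (U L : Finset (Fin n)) : Finset (Finset (Fin n)) :=
  Finset.univ.filter fun B => galeLE Fin.val U B ∧ galeLE Fin.val B L
section Aux

variable {n : ℕ} {Bs : Finset (Finset (Fin n))}

def Exch (Bs : Finset (Finset (Fin n))) : Prop :=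
  ∀ B₁ ∈ Bs, ∀ B₂ ∈ Bs, ∀ x ∈ B₁ \ B₂, ∃ y ∈ B₂ \ B₁, insert y (B₁.erase x) ∈ Bs

lemma card_eq_aux (hex : Exch Bs) :
    ∀ k B₁, B₁ ∈ Bs → ∀ B₂ ∈ Bs, (B₁ \ B₂).card = k → B₁.card = B₂.card := by
  intro k
  induction k with
  | zero =>
    intro B₁ h₁ B₂ h₂ hc
    have hsub : B₁ ⊆ B₂ := by
      rw [← sdiff_eq_empty_iff_subset]
      exact card_eq_zero.mp hc
    have hsub2 : B₂ ⊆ B₁ := by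
      by_contra hcon
      obtain ⟨x, hx1, hx2⟩ := not_subset.mp hcon
      obtain ⟨y, hy, -⟩ := hex B₂ h₂ B₁ h₁ x (mem_sdiff.mpr ⟨hx1, hx2⟩)
      rw [mem_sdiff] at hy
      exact hy.2 (hsub hy.1)
    rw [Finset.Subset.antisymm hsub hsub2]
  | succ k ih =>
    intro B₁ h₁ B₂ h₂ hc
    have hne : (B₁ \ B₂).Nonempty := by rw [← card_pos, hc]; omega
    obtain ⟨x, hx⟩ := hne
    obtain ⟨y, hy, hB'⟩ := hex B₁ h₁ B₂ h₂ x hx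
    rw [mem_sdiff] at hx hy
    have hcard : (insert y (B₁.erase x)).card = B₁.card := by
      rw [card_insert_of_notMem (fun h => hy.2 (mem_of_mem_erase h)),
        card_erase_of_mem hx.1]
      have : 0 < B₁.card := card_pos.mpr ⟨x, hx.1⟩
      omega
    have hdiff : insert y (B₁.erase x) \ B₂ = (B₁ \ B₂).erase x := by
      ext z
      simp only [mem_sdiff, mem_insert, mem_erase]
      constructor
      · rintro ⟨hz1 | hz1, hz2⟩
        · exact absurd hy.1 (hz1 ▸ hz2)
        · exact ⟨hz1.1, hz1.2, hz2⟩
      · rintro ⟨hz1, hz2, hz3⟩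
        exact ⟨Or.inr ⟨hz1, hz2⟩, hz3⟩
    have := ih (insert y (B₁.erase x)) hB' B₂ h₂ (by
      rw [hdiff, card_erase_of_mem (mem_sdiff.mpr hx), hc]; omega)
    omega

lemma card_eq_of_exch (hex : Exch Bs) {B₁ B₂ : Finset (Fin n)}
    (h₁ : B₁ ∈ Bs) (h₂ : B₂ ∈ Bs) : B₁.card = B₂.card :=
  card_eq_aux hex _ B₁ h₁ B₂ h₂ rfl

lemma between_aux (hex : Exch Bs) {I B : Finset (Fin n)} (hB : B ∈ Bs) :
    ∀ k B₁, B₁ ∈ Bs → I ⊆ B₁ → (B₁ \ (I ∪ B)).card = k →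
    ∃ B', B' ∈ Bs ∧ I ⊆ B' ∧ B' ⊆ I ∪ B := by
  intro k
  induction k with
  | zero =>
    intro B₁ h₁ hI hc
    exact ⟨B₁, h₁, hI, sdiff_eq_empty_iff_subset.mp (card_eq_zero.mp hc)⟩
  | succ k ih =>
    intro B₁ h₁ hI hc
    have hne : (B₁ \ (I ∪ B)).Nonempty := by rw [← card_pos, hc]; omega
    obtain ⟨y, hy⟩ := hne
    rw [mem_sdiff, mem_union] at hy
    push_neg at hy
    obtain ⟨z, hz, hB'⟩ := hex B₁ h₁ B hB y (mem_sdiff.mpr ⟨hy.1, hy.2.2⟩)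
    rw [mem_sdiff] at hz
    refine ih (insert z (B₁.erase y)) hB' ?_ ?_
    · intro a ha
      exact mem_insert_of_mem (mem_erase_of_ne_of_mem (fun h => hy.2.1 (h ▸ ha)) (hI ha))
    · have hdiff : insert z (B₁.erase y) \ (I ∪ B) = (B₁ \ (I ∪ B)).erase y := by
        ext w
        simp only [mem_sdiff, mem_insert, mem_erase, mem_union]
        constructor
        · rintro ⟨hw1 | hw1, hw2⟩
          · exact absurd (Or.inr (hw1 ▸ hz.1)) hw2
          · exact ⟨hw1.1, hw1.2, hw2⟩
        · rintro ⟨hw1, hw2, hw3⟩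
          exact ⟨Or.inr ⟨hw1, hw2⟩, hw3⟩
      have hymem : y ∈ B₁ \ (I ∪ B) :=
        mem_sdiff.mpr ⟨hy.1, fun h => (mem_union.mp h).elim hy.2.1 hy.2.2⟩
      rw [hdiff, card_erase_of_mem hymem, hc]; omega

lemma indep_subset {I J : Finset (Fin n)} (h : Indep Bs I) (hJ : J ⊆ I) : Indep Bs J := by
  obtain ⟨B, hB, hIB⟩ := h
  exact ⟨B, hB, hJ.trans hIB⟩

lemma augment (hex : Exch Bs) {I₁ I₂ : Finset (Fin n)}
    (h₁ : Indep Bs I₁) (h₂ : Indep Bs I₂) (hlt : I₁.card < I₂.card) :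
    ∃ e ∈ I₂, e ∉ I₁ ∧ Indep Bs (insert e I₁) := by
  obtain ⟨B₂, hB₂, hI₂⟩ := h₂
  obtain ⟨B₀, hB₀, hI₁⟩ := h₁
  obtain ⟨B₁, hB₁, hIB₁, hB₁sub⟩ := between_aux hex hB₂ _ B₀ hB₀ hI₁ rfl
  by_cases hcase : ∃ e ∈ I₂ ∩ B₁, e ∉ I₁
  · obtain ⟨e, he, heI₁⟩ := hcase
    rw [mem_inter] at he
    exact ⟨e, he.1, heI₁, B₁, hB₁, insert_subset he.2 hIB₁⟩
  · exfalso
    push_neg at hcase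
    have hsub : B₁ \ I₁ ⊆ B₂ \ I₂ := by
      intro b hb
      rw [mem_sdiff] at hb ⊢
      have hbB₂ : b ∈ B₂ := by
        rcases mem_union.mp (hB₁sub hb.1) with h | h
        · exact absurd h hb.2
        · exact h
      refine ⟨hbB₂, fun hbI₂ => hb.2 (hcase b (mem_inter.mpr ⟨hbI₂, hb.1⟩))⟩
    have h1 : B₁.card ≤ I₁.card + (B₁ \ I₁).card := by
      have := card_union_le I₁ (B₁ \ I₁)
      have : B₁ ⊆ I₁ ∪ (B₁ \ I₁) := by
        intro b hb
        by_cases h : b ∈ I₁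
        · exact mem_union_left _ h
        · exact mem_union_right _ (mem_sdiff.mpr ⟨hb, h⟩)
      calc B₁.card ≤ (I₁ ∪ (B₁ \ I₁)).card := card_le_card this
        _ ≤ I₁.card + (B₁ \ I₁).card := card_union_le _ _
    have h2 : (B₁ \ I₁).card ≤ (B₂ \ I₂).card := card_le_card hsub
    have h3 : (B₂ \ I₂).card = B₂.card - I₂.card := card_sdiff_of_subset hI₂
    have h4 : I₂.card ≤ B₂.card := card_le_card hI₂
    have h5 : B₁.card = B₂.card := card_eq_of_exch hex hB₁ hB₂
    omega

lemma rkOf_exists (hne : Bs.Nonempty) (S : Finset (Fin n)) :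
    ∃ B ∈ Bs, rkOf Bs S = (S ∩ B).card :=
  Finset.exists_mem_eq_sup _ hne _

lemma le_rkOf {B : Finset (Fin n)} (hB : B ∈ Bs) (S : Finset (Fin n)) :
    (S ∩ B).card ≤ rkOf Bs S :=
  Finset.le_sup (f := fun B => (S ∩ B).card) hB

lemma rkOf_mono {S T : Finset (Fin n)} (h : S ⊆ T) : rkOf Bs S ≤ rkOf Bs T :=
  Finset.sup_mono_fun fun B _ => card_le_card (inter_subset_inter_right h)

lemma card_le_rkOf {I S : Finset (Fin n)} (hI : Indep Bs I) (hIS : I ⊆ S) :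
    I.card ≤ rkOf Bs S := by
  obtain ⟨B, hB, hIB⟩ := hI
  calc I.card ≤ (S ∩ B).card := card_le_card (subset_inter hIS hIB)
    _ ≤ rkOf Bs S := le_rkOf hB S

lemma exists_max_indep (hne : Bs.Nonempty) (hex : Exch Bs) (T : Finset (Fin n)) :
    ∀ d K, Indep Bs K → K ⊆ T → rkOf Bs T - K.card = d →
    ∃ K', Indep Bs K' ∧ K ⊆ K' ∧ K' ⊆ T ∧ K'.card = rkOf Bs T := by
  intro d
  induction d with
  | zero =>
    intro K hK hKT hd
    exact ⟨K, hK, Finset.Subset.refl _, hKT, by have := card_le_rkOf hK hKT; omega⟩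
  | succ d ih =>
    intro K hK hKT hd
    obtain ⟨B, hB, hrk⟩ := rkOf_exists hne T
    have hTB : Indep Bs (T ∩ B) := ⟨B, hB, inter_subset_right⟩
    have hlt : K.card < (T ∩ B).card := by omega
    obtain ⟨e, he, heK, hind⟩ := augment hex hK hTB hlt
    have heT : e ∈ T := (mem_inter.mp he).1
    refine ih (insert e K) hind (insert_subset heT hKT) ?_ |>.imp
      fun K' ⟨h1, h2, h3, h4⟩ => ⟨h1, (subset_insert _ _).trans h2, h3, h4⟩
    rw [card_insert_of_notMem heK]
    omega

lemma rk_insert_eq_of_subset (hne : Bs.Nonempty) (hex : Exch Bs)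
    {x : Fin n} {S T : Finset (Fin n)}
    (h : rkOf Bs (insert x S) = rkOf Bs S) (hST : S ⊆ T) :
    rkOf Bs (insert x T) = rkOf Bs T := by
  by_cases hxS : x ∈ S
  · rw [insert_eq_self.mpr (hST hxS)]
  refine le_antisymm ?_ (rkOf_mono (subset_insert _ _))
  obtain ⟨B, hB, hrS⟩ := rkOf_exists hne S
  set K := S ∩ B with hKdef
  have hxK : x ∉ K := fun hx => hxS (mem_inter.mp hx).1
  have hKind : Indep Bs K := ⟨B, hB, inter_subset_right⟩
  have hKx : ¬ Indep Bs (insert x K) := by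
    intro hind
    have : (insert x K).card ≤ rkOf Bs (insert x S) :=
      card_le_rkOf hind (insert_subset_insert _ inter_subset_left)
    rw [card_insert_of_notMem hxK, h, ← hrS] at this
    omega
  obtain ⟨KT, hKTi, hKKT, hKTT, hKTc⟩ :=
    exists_max_indep hne hex T _ K hKind (inter_subset_left.trans hST) rfl
  by_contra hcon
  push_neg at hcon
  obtain ⟨B', hB', hrT⟩ := rkOf_exists hne (insert x T)
  have hIind : Indep Bs ((insert x T) ∩ B') := ⟨B', hB', inter_subset_right⟩
  have hlt : KT.card < ((insert x T) ∩ B').card := by omega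
  obtain ⟨e, he, heKT, hind⟩ := augment hex hKTi hIind hlt
  rcases mem_insert.mp (mem_inter.mp he).1 with rfl | heT
  · exact hKx (indep_subset hind (insert_subset_insert _ hKKT))
  · have : (insert e KT).card ≤ rkOf Bs T :=
      card_le_rkOf hind (insert_subset heT hKTT)
    rw [card_insert_of_notMem heKT] at this
    omega

lemma circuit_nonempty {C : Finset (Fin n)} (hne : Bs.Nonempty) (hC : IsCircuit Bs C) :
    C.Nonempty := by
  rcases C.eq_empty_or_nonempty with rfl | h
  · obtain ⟨B, hB⟩ := hne
    exact absurd ⟨B, hB, empty_subset _⟩ hC.1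
  · exact h

lemma rk_insert_of_circuit (hne : Bs.Nonempty) (hex : Exch Bs)
    {x : Fin n} {D T : Finset (Fin n)}
    (hC : IsCircuit Bs D) (hx : x ∈ D) (hDT : D.erase x ⊆ T) :
    rkOf Bs (insert x T) = rkOf Bs T := by
  refine rk_insert_eq_of_subset hne hex (S := D.erase x) ?_ hDT
  rw [insert_erase hx]
  have h1 : Indep Bs (D.erase x) :=
    hC.2 _ (erase_subset _ _) (fun h => (erase_ne_self.mpr hx : D.erase x ≠ D) h)
  have h2 : (D.erase x).card ≤ rkOf Bs (D.erase x) := card_le_rkOf h1 (Finset.Subset.refl _)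
  have h3 : rkOf Bs D ≤ D.card - 1 := by
    apply Finset.sup_le
    intro B hB
    have hle : (D ∩ B).card ≤ D.card := card_le_card inter_subset_left
    rcases lt_or_eq_of_le hle with h | h
    · have : 0 < D.card := card_pos.mpr (circuit_nonempty hne hC)
      omega
    · exfalso
      have hDB : D ∩ B = D := eq_of_subset_of_card_le inter_subset_left (le_of_eq h.symm)
      have hsub : D ⊆ B := by
        intro a ha
        rw [← hDB] at ha
        exact (mem_inter.mp ha).2
      exact hC.1 ⟨B, hB, hsub⟩
  have h4 : (D.erase x).card = D.card - 1 := card_erase_of_mem hx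
  have h5 : rkOf Bs (D.erase x) ≤ rkOf Bs D := rkOf_mono (erase_subset _ _)
  omega

lemma exists_circuit_of_rk_eq (hne : Bs.Nonempty) {x : Fin n} {A : Finset (Fin n)}
    (h : rkOf Bs (insert x A) = rkOf Bs A) (hxA : x ∉ A) :
    ∃ C, IsCircuit Bs C ∧ x ∈ C ∧ C ⊆ insert x A := by
  obtain ⟨B, hB, hrk⟩ := rkOf_exists hne A
  set K := A ∩ B with hKdef
  have hxK : x ∉ K := fun hx => hxA (mem_inter.mp hx).1
  have hdep : ¬ Indep Bs (insert x K) := by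
    intro hind
    have : (insert x K).card ≤ rkOf Bs (insert x A) :=
      card_le_rkOf hind (insert_subset_insert _ inter_subset_left)
    rw [card_insert_of_notMem hxK, h, ← hrk] at this
    omega
  have h𝒮 : (insert x K) ∈ (insert x K).powerset.filter (fun C => ¬ Indep Bs C) :=
    mem_filter.mpr ⟨mem_powerset_self _, hdep⟩
  obtain ⟨C, hC𝒮, hmin⟩ :=
    Finset.exists_min_image _ card ⟨_, h𝒮⟩
  rw [mem_filter, mem_powerset] at hC𝒮
  have hcirc : IsCircuit Bs C := by
    refine ⟨hC𝒮.2, fun E hE hEne => ?_⟩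
    by_contra hEdep
    have hEmem : E ∈ (insert x K).powerset.filter (fun C => ¬ Indep Bs C) :=
      mem_filter.mpr ⟨mem_powerset.mpr (hE.trans hC𝒮.1), hEdep⟩
    have := hmin E hEmem
    have : E.card < C.card := card_lt_card (ssubset_of_subset_of_ne hE hEne)
    omega
  have hxC : x ∈ C := by
    by_contra hxC
    have : C ⊆ K := fun a ha => by
      rcases mem_insert.mp (hC𝒮.1 ha) with rfl | h
      · exact absurd ha hxC
      · exact h
    exact hC𝒮.2 ⟨B, hB, this.trans inter_subset_right⟩
  exact ⟨C, hcirc, hxC, hC𝒮.1.trans (insert_subset_insert _ inter_subset_left)⟩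

end Aux


section Aux2

variable {n : ℕ} {Bs : Finset (Finset (Fin n))}

lemma countP_mono_forall₂ {l₁ l₂ : List ℕ} (h : List.Forall₂ (· ≤ ·) l₁ l₂) (c : ℕ) :
    l₂.countP (fun v => decide (v < c)) ≤ l₁.countP (fun v => decide (v < c)) := by
  induction h with
  | nil => simp
  | @cons a b l₁ l₂ hab htail ih =>
    rw [List.countP_cons, List.countP_cons]
    by_cases hbc : b < c <;> by_cases hac : a < c <;>
      simp [hac, hbc] <;> omega

lemma card_filter_lt_eq_countP {f : Fin n → ℕ} (hf : Function.Injective f)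
    (A : Finset (Fin n)) (c : ℕ) :
    (A.filter fun y => f y < c).card = (sortedVals f A).countP (fun v => decide (v < c)) := by
  have h1 : (sortedVals f A).countP (fun v => decide (v < c))
      = Multiset.countP (fun v => v < c) (A.image f).val := by
    rw [← Finset.sort_eq (A.image f) (· ≤ ·), Multiset.coe_countP]
    rfl
  rw [h1, Multiset.countP_eq_card_filter, ← Finset.filter_val, ← Finset.card_def,
    Finset.filter_image, Finset.card_image_of_injective _ hf]

lemma galeLE_filter_card {f : Fin n → ℕ} (hf : Function.Injective f)
    {A B : Finset (Fin n)} (h : galeLE f A B) (c : ℕ) :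
    (B.filter fun y => f y < c).card ≤ (A.filter fun y => f y < c).card := by
  rw [card_filter_lt_eq_countP hf, card_filter_lt_eq_countP hf]
  exact countP_mono_forall₂ h c

lemma minimal_inter_downset {B₀ : Finset (Fin n)} {f : Fin n → ℕ}
    (hB₀ : B₀ ∈ Bs) (hmin : ∀ B ∈ Bs, galeLE f B₀ B)
    (hf : Function.Injective f) (hne : Bs.Nonempty) (c : ℕ) :
    (B₀.filter fun y => f y < c).card = rkOf Bs (univ.filter fun y => f y < c) := by
  have key : ∀ B : Finset (Fin n),
      (univ.filter fun y => f y < c) ∩ B = B.filter fun y => f y < c := by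
    intro B
    ext z
    simp only [mem_inter, mem_filter, mem_univ, true_and]
    tauto
  apply le_antisymm
  · rw [← key B₀]
    exact le_rkOf hB₀ _
  · obtain ⟨B, hB, hrk⟩ := rkOf_exists hne _
    rw [hrk, key B]
    exact galeLE_filter_card hf (hmin B hB) c

end Aux2
end
/-- If `M` is a quotient of `N`, then for any total order on the ground set
(given by an injective key `f`), the Gale-minimal basis of `M` is contained in the
Gale-minimal basis of `N`. -/
theorem stmt1 (n : ℕ) (M N : FinMatroid n)
    (hq : IsQuotient M.bases N.bases)
    (f : Fin n → ℕ) (hf : Function.Injective f)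
    (BM BN : Finset (Fin n))
    (hBM : BM ∈ M.bases ∧ ∀ B ∈ M.bases, galeLE f BM B)
    (hBN : BN ∈ N.bases ∧ ∀ B ∈ N.bases, galeLE f BN B) :
    BM ⊆ BN := by
  classical
  intro x hx
  set A : Finset (Fin n) := univ.filter (fun y => f y < f x) with hA
  have hxA : x ∉ A := by simp [hA]
  have hins : (univ.filter fun y => f y < f x + 1) = insert x A := by
    ext y
    simp only [hA, mem_filter, mem_univ, true_and, mem_insert]
    constructor
    · intro h
      rcases Nat.lt_succ_iff_lt_or_eq.mp h with h | h
      · exact Or.inr h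
      · exact Or.inl (hf h)
    · rintro (rfl | h)
      · exact Nat.lt_succ_self _
      · omega
  have hBMfilter : BM.filter (fun y => f y < f x + 1)
      = insert x (BM.filter fun y => f y < f x) := by
    ext y
    simp only [mem_filter, mem_insert]
    constructor
    · rintro ⟨hy, hlt⟩
      rcases Nat.lt_succ_iff_lt_or_eq.mp hlt with h | h
      · exact Or.inr ⟨hy, h⟩
      · exact Or.inl (hf h)
    · rintro (rfl | ⟨hy, h⟩)
      · exact ⟨hx, Nat.lt_succ_self _⟩
      · exact ⟨hy, by omega⟩
  by_contra hxBN
  have hBNfilter : BN.filter (fun y => f y < f x + 1) = BN.filter (fun y => f y < f x) := by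
    ext y
    simp only [mem_filter]
    constructor
    · rintro ⟨hy, hlt⟩
      refine ⟨hy, ?_⟩
      rcases Nat.lt_succ_iff_lt_or_eq.mp hlt with h | h
      · exact h
      · exact absurd (hf h ▸ hy) hxBN
    · rintro ⟨hy, h⟩
      exact ⟨hy, by omega⟩
  have hexM : Exch M.bases := M.exchange
  have hMA := minimal_inter_downset hBM.1 hBM.2 hf M.bases_nonempty (f x)
  have hMA' := minimal_inter_downset hBM.1 hBM.2 hf M.bases_nonempty (f x + 1)
  have hNA := minimal_inter_downset hBN.1 hBN.2 hf N.bases_nonempty (f x)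
  have hNA' := minimal_inter_downset hBN.1 hBN.2 hf N.bases_nonempty (f x + 1)
  have hxBMf : x ∉ BM.filter (fun y => f y < f x) := by simp
  have hrkM : rkOf M.bases (insert x A) = rkOf M.bases A + 1 := by
    rw [← hins, ← hMA', ← hMA, hBMfilter, card_insert_of_notMem hxBMf]
  have hrkN : rkOf N.bases (insert x A) = rkOf N.bases A := by
    rw [← hins, ← hNA', ← hNA, hBNfilter]
  obtain ⟨C, hCcirc, hxC, hCsub⟩ := exists_circuit_of_rk_eq N.bases_nonempty hrkN hxA
  obtain ⟨𝒟, h𝒟, hCeq⟩ := hq C hCcirc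
  have hxsup : x ∈ 𝒟.sup id := hCeq ▸ hxC
  obtain ⟨D, hD, hxD⟩ := Finset.mem_sup.mp hxsup
  have hDC : D ⊆ C := by
    have h := Finset.le_sup (f := id) hD
    rw [← hCeq] at h
    exact h
  have hDsub : D.erase x ⊆ A := by
    intro a ha
    rw [mem_erase] at ha
    rcases mem_insert.mp (hCsub (hDC ha.2)) with h | h
    · exact absurd h ha.1
    · exact h
  have := rk_insert_of_circuit M.bases_nonempty hexM (h𝒟 D hD) hxD hDsub
  omega
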